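/- In the no-limit clairvoyance game with n = 2, for every Nash equilibrium calling probability α ∈ [1/2, 2/3] vs. a bet of 1, there exists a sequence of totally mixed strategies for player 1 converging to the unique equilibrium strategy of player 1 against each of which player 2's equilibrium strategy is a best response: namely, player 1 bets 1 with probability ε with a winning hand and ε/2 with a losing hand (remaining mass as in equilibrium), which makes player 2 exactly indifferent between calling and folding a bet of 1. -/

import Mathlib

/-!  A concrete model of the no-limit clairvoyance game with integer bet sizes.
Player 1 is dealt a winning hand (`true`) or losing hand (`false`) with probability
1/2 each, bets an integer `x ∈ {0,…,n}` (0 = check), and player 2 calls or folds.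
A strategy for player 1 assigns to each hand a probability distribution over bet
sizes; a strategy for player 2 assigns to each bet size a calling probability. -/

/-- `s` is a valid strategy for player 1 in the clairvoyance game with stack `n`. -/
def IsStrat1 (n : ℕ) (s : Bool → ℕ → ℝ) : Prop :=
  (∀ h x, 0 ≤ s h x) ∧ (∀ h : Bool, ∑ x ∈ Finset.range (n + 1), s h x = 1)

/-- `s` is a valid strategy for player 2 (a calling probability for each bet size). -/
def IsStrat2 (n : ℕ) (s : ℕ → ℝ) : Prop :=
  ∀ x, 0 ≤ s x ∧ s x ≤ 1

/-- Player 1's payoff with hand `h` after betting `x`, when player 2 calls a bet of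
size `x` with probability `s2 x`: a check yields ±0.5, a called bet of `x` yields
±(0.5 + x), and a fold yields +0.5. -/
noncomputable def pay (s2 : ℕ → ℝ) (h : Bool) (x : ℕ) : ℝ :=
  if x = 0 then (if h then 0.5 else -0.5)
  else s2 x * (if h then (0.5 + (x : ℝ)) else -(0.5 + (x : ℝ))) + (1 - s2 x) * 0.5

/-- Player 1's expected payoff (hands equiprobable); the game is zero-sum. -/
noncomputable def u1 (n : ℕ) (s1 : Bool → ℕ → ℝ) (s2 : ℕ → ℝ) : ℝ :=
  (1/2) * ∑ x ∈ Finset.range (n + 1), s1 true x * pay s2 true x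
    + (1/2) * ∑ x ∈ Finset.range (n + 1), s1 false x * pay s2 false x

/-- `(s1, s2)` is a Nash equilibrium of the (zero-sum) clairvoyance game:
no unilateral profitable deviation. -/
def IsNash (n : ℕ) (s1 : Bool → ℕ → ℝ) (s2 : ℕ → ℝ) : Prop :=
  IsStrat1 n s1 ∧ IsStrat2 n s2 ∧
  (∀ s1', IsStrat1 n s1' → u1 n s1' s2 ≤ u1 n s1 s2) ∧
  (∀ s2', IsStrat2 n s2' → u1 n s1 s2 ≤ u1 n s1 s2')

open Filter

/-- In the clairvoyance game with `n = 2`, for every Nash equilibrium calling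
probability `α ∈ [1/2, 2/3]` vs. a bet of 1 (with a bet of 2 called with probability
1/3), there is a sequence of totally mixed strategies for player 1 converging to
player 1's unique equilibrium strategy, betting 1 with probability `ε` with a winning
hand and `ε/2` with a losing hand, which makes player 2 exactly indifferent between
calling and folding a bet of 1, and against each of which player 2's equilibrium
strategy is a best response (player 2 minimizes `u1` in the zero-sum game). -/
theorem thpe_characterization_fails_in_extensive_form (α : ℝ)
    (h1 : 1/2 ≤ α) (h2 : α ≤ 2/3)
    (s1eq : Bool → ℕ → ℝ)
    (hs1eq : s1eq = fun h x => if h then (if x = 2 then 1 else 0)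
      else (if x = 2 then 2/3 else if x = 0 then 1/3 else 0))
    (s2 : ℕ → ℝ) (hs2 : s2 = fun x => if x = 2 then 1/3 else α) :
    ∃ e : ℕ → ℝ, (∀ k, 0 < e k) ∧ Tendsto e atTop (nhds 0) ∧
    ∃ t : ℕ → Bool → ℕ → ℝ,
      (∀ k, IsStrat1 2 (t k) ∧ ∀ h x, x ≤ 2 → 0 < t k h x) ∧
      (∀ k, t k true 1 = e k ∧ t k false 1 = e k / 2) ∧
      (∀ k, t k true 1 * (-1.5) + t k false 1 * 1.5
        = (t k true 1 + t k false 1) * (-0.5)) ∧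
      (∀ h x, Tendsto (fun k => t k h x) atTop (nhds (s1eq h x))) ∧
      (∀ k, ∀ s2', IsStrat2 2 s2' → u1 2 (t k) s2 ≤ u1 2 (t k) s2') := by
  set e : ℕ → ℝ := fun k => (1 / (k + 1 : ℝ)) / 4 with he
  have hepos : ∀ k, 0 < e k := by
    intro k
    have : (0:ℝ) < (k:ℝ) + 1 := by positivity
    positivity
  have hele : ∀ k, e k ≤ 1/4 := by
    intro k
    have h1 : (1:ℝ) ≤ (k:ℝ) + 1 := by
      have : (0:ℝ) ≤ (k:ℝ) := Nat.cast_nonneg k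
      linarith
    have h2 : 1 / ((k:ℝ) + 1) ≤ 1 := by
      rw [div_le_one (by linarith)]
      exact h1
    simp only [he]
    linarith
  have hetend : Tendsto e atTop (nhds 0) := by
    have h : Tendsto (fun n : ℕ => 1 / ((n : ℝ) + 1)) atTop (nhds 0) :=
      tendsto_one_div_add_atTop_nhds_zero_nat
    have := h.div_const (4:ℝ)
    simpa [he] using this
  refine ⟨e, hepos, hetend, ?_⟩
  refine ⟨fun k h x =>
    if h then (if x = 0 then e k else if x = 1 then e k else if x = 2 then 1 - 2 * e k else 0)
    else (if x = 0 then 1/3 + (5/6) * e k else if x = 1 then e k / 2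
      else if x = 2 then 2/3 - (4/3) * e k else 0), ?_, ?_, ?_, ?_, ?_⟩
  · intro k
    have h1 := hepos k
    have h2 := hele k
    constructor
    · constructor
      · intro h x
        cases h <;> rcases x with _ | _ | _ | x <;> simp <;> linarith
      · intro h
        cases h <;> simp [Finset.sum_range_succ] <;> ring
    · intro h x hx
      cases h <;> interval_cases x <;> simp <;> linarith
  · intro k; simp
  · intro k; simp; ring
  · intro h x
    subst hs1eq
    have haff : ∀ c d : ℝ, Tendsto (fun k => c + d * e k) atTop (nhds c) := by
      intro c d
      have h0 := hetend.const_mul d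
      rw [mul_zero] at h0
      have h3 := (tendsto_const_nhds (x := c) (f := atTop)).add h0
      rw [add_zero] at h3
      exact h3
    cases h <;> rcases x with _ | _ | _ | x <;> simp
    all_goals first
      | exact hetend
      | exact haff _ _
      | (simpa using (haff 0 (1/2)).congr (fun k => by ring))
      | (simpa using (haff 1 (-2)).congr (fun k => by ring))
      | (simpa using (haff (2/3) (-(4/3))).congr (fun k => by ring))
  · intro k s2' hs2'
    have key : ∀ s : ℕ → ℝ, u1 2 (fun h x =>
      if h then (if x = 0 then e k else if x = 1 then e k else if x = 2 then 1 - 2 * e k else 0)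
      else (if x = 0 then 1/3 + (5/6) * e k else if x = 1 then e k / 2
        else if x = 2 then 2/3 - (4/3) * e k else 0)) s
        = (1/2) * (e k * 0.5 + e k * 0.5 + (1 - 2 * e k) * 0.5)
          + (1/2) * ((1/3 + (5/6) * e k) * (-0.5) + (e k / 2) * 0.5
            + (2/3 - (4/3) * e k) * 0.5) := by
      intro s
      simp only [u1, pay, Finset.sum_range_succ, Finset.sum_range_zero]
      norm_num
      ring
    rw [key s2', key s2]
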